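/- For φ₋₁(x) := (x−1)²/(2x) on (0,∞), the convex conjugate φ₋₁* satisfies φ₋₁*(t) = 1 − √(1−2t) for t ≤ 1/2 and φ₋₁*(t) = +∞ for t > 1/2. -/

import Mathlib

/-- The convex conjugate of φ₋₁(x) = (x-1)²/(2x) (with φ₋₁ = +∞ on x ≤ 0,
encoded by taking the supremum over the domain x > 0) equals 1 - √(1-2t) for
t ≤ 1/2 and +∞ (i.e. the set is unbounded above) for t > 1/2. -/
theorem conjugate_of_modified_chisq (t : ℝ) :
    (t ≤ 1 / 2 → IsLUB {y : ℝ | ∃ x : ℝ, 0 < x ∧ y = t * x - (x - 1) ^ 2 / (2 * x)}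
        (1 - Real.sqrt (1 - 2 * t))) ∧
    (1 / 2 < t → ¬ BddAbove {y : ℝ | ∃ x : ℝ, 0 < x ∧ y = t * x - (x - 1) ^ 2 / (2 * x)}) := by
  constructor
  · intro ht
    set a : ℝ := 1 / 2 - t with ha
    have ha0 : 0 ≤ a := by simp [ha]; linarith
    set s : ℝ := Real.sqrt (1 - 2 * t) with hs
    have hsq : s ^ 2 = 2 * a := by
      rw [hs, sq, Real.mul_self_sqrt (by linarith)]; ring
    have hs0 : 0 ≤ s := Real.sqrt_nonneg _
    constructor
    · rintro y ⟨x, hx, rfl⟩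
      have h2x : (0 : ℝ) < 2 * x := by linarith
      have expand : t * x - (x - 1) ^ 2 / (2 * x) = 1 - a * x - 1 / (2 * x) := by
        field_simp; ring
      rw [expand]
      have h1 : s * (2 * x) ≤ (a * x + 1 / (2 * x)) * (2 * x) := by
        have key : s * (2 * x) ≤ 2 * a * x ^ 2 + 1 := by
          nlinarith [sq_nonneg (s * x - 1)]
        have : (a * x + 1 / (2 * x)) * (2 * x) = 2 * a * x ^ 2 + 1 := by
          field_simp
        rw [this]; exact key
      have h2 : s ≤ a * x + 1 / (2 * x) := le_of_mul_le_mul_right h1 h2x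
      linarith
    · rintro b hb
      rcases eq_or_lt_of_le ha0 with haz | hap
      · -- a = 0 : supremum is 1, approached as x → ∞
        have hsz : s = 0 := by
          rw [hs]
          have : 1 - 2 * t = 0 := by simp [ha] at haz; linarith
          simp [this]
        rw [hsz, sub_zero]
        by_contra hlt
        push_neg at hlt
        have ht2 : t = 1 / 2 := by simp [ha] at haz; linarith
        set x : ℝ := 1 / (1 - b) with hxdef
        have hb1 : 0 < 1 - b := by linarith
        have hx : 0 < x := by positivity
        have hmem : (1 + b) / 2 ∈ {y : ℝ | ∃ x : ℝ, 0 < x ∧ y = t * x - (x - 1) ^ 2 / (2 * x)} := by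
          refine ⟨x, hx, ?_⟩
          rw [ht2, hxdef]
          field_simp
          ring
        have := hb hmem
        linarith
      · -- a > 0 : supremum attained at x = 1 / s
        have hsp : 0 < s := by nlinarith
        have hmem : 1 - s ∈ {y : ℝ | ∃ x : ℝ, 0 < x ∧ y = t * x - (x - 1) ^ 2 / (2 * x)} := by
          refine ⟨1 / s, by positivity, ?_⟩
          have hts : t = 1 / 2 - a := by rw [ha]; ring
          rw [hts]
          field_simp
          nlinarith [hsq]
        exact hb hmem
  · intro ht hB
    obtain ⟨b, hb⟩ := hB
    set x : ℝ := max 1 ((b + 1 / 2) / (t - 1 / 2)) with hxdef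
    have hx1 : 1 ≤ x := le_max_left _ _
    have hx : 0 < x := by linarith
    have hmem : t * x - (x - 1) ^ 2 / (2 * x) ∈
        {y : ℝ | ∃ x : ℝ, 0 < x ∧ y = t * x - (x - 1) ^ 2 / (2 * x)} := ⟨x, hx, rfl⟩
    have hle := hb hmem
    have expand : t * x - (x - 1) ^ 2 / (2 * x) = 1 + (t - 1 / 2) * x - 1 / (2 * x) := by
      field_simp; ring
    have hinv : 1 / (2 * x) ≤ 1 / 2 := by
      apply div_le_div_of_nonneg_left (by norm_num) (by norm_num) (by linarith)
    have hgrow : b + 1 / 2 ≤ (t - 1 / 2) * x := by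
      have h2 : (b + 1 / 2) / (t - 1 / 2) ≤ x := le_max_right _ _
      have hne : t - 1 / 2 ≠ 0 := by linarith
      calc b + 1 / 2 = (t - 1 / 2) * ((b + 1 / 2) / (t - 1 / 2)) := by
            rw [mul_comm, div_mul_cancel₀ _ hne]
        _ ≤ (t - 1 / 2) * x := by
            apply mul_le_mul_of_nonneg_left h2 (by linarith)
    rw [expand] at hle
    linarith
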